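/- If the destination index function f : I → K is injective on the elements of the list L (no two distinct positions of L have the same image under f), then for each i ∈ L, the final value at key f(i) after the sequential loop V[f(i)] ⊕= h(i) equals V₀(f(i)) ⊕ h(i). This justifies eliminating the group-by when the group-by key is unique. -/

import Mathlib

lemma loop_untouched {I K M : Type*} [DecidableEq K] [AddCommMonoid M]
    (f : I → K) (h : I → M) :
    ∀ (L : List I) (V₀ : K → M) (k : K), (∀ j ∈ L, f j ≠ k) →
      (List.foldl (fun V j => Function.update V (f j) (V (f j) + h j)) V₀ L) k = V₀ k := by
  intro L
  induction L with
  | nil => intro V₀ k _; rfl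
  | cons a t ih =>
    intro V₀ k hk
    simp only [List.foldl_cons]
    rw [ih _ k (fun j hj => hk j (List.mem_cons_of_mem _ hj))]
    exact Function.update_of_ne (Ne.symm (hk a List.mem_cons_self)) _ _

theorem loop_unique_key {I K M : Type*} [DecidableEq K] [AddCommMonoid M]
    (f : I → K) (h : I → M) (V₀ : K → M) (L : List I)
    (hnodup : L.Nodup)
    (hinj : ∀ i ∈ L, ∀ j ∈ L, f i = f j → i = j) :
    ∀ i ∈ L,
      (List.foldl (fun V j => Function.update V (f j) (V (f j) + h j)) V₀ L) (f i) =
        V₀ (f i) + h i := by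
  induction L generalizing V₀ with
  | nil => intro i hi; simp at hi
  | cons a t ih =>
    intro i hi
    simp only [List.foldl_cons]
    rcases List.mem_cons.mp hi with rfl | hit
    · rw [loop_untouched]
      · simp
      · intro j hj hfj
        have : j = i := hinj j (List.mem_cons_of_mem _ hj) i List.mem_cons_self hfj
        subst this
        exact (List.nodup_cons.mp hnodup).1 hj
    · have hne : f a ≠ f i := by
        intro hfa
        have : a = i := hinj a List.mem_cons_self i hi hfa
        subst this
        exact (List.nodup_cons.mp hnodup).1 hit
      rw [ih _ (List.nodup_cons.mp hnodup).2
          (fun x hx y hy => hinj x (List.mem_cons_of_mem _ hx) y (List.mem_cons_of_mem _ hy))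
          i hit]
      rw [Function.update_of_ne (Ne.symm hne)]
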